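/- Let N ≥ 2 and let A ∈ ℂ^{N×N} be positive definite. Then the matrix Ã, obtained from A by subtracting det(A_{N−1})/det(A_{N−2}) from the bottom-right entry a_{N−1,N−1} and leaving all other entries unchanged, is positive semidefinite. (Here A_n denotes the leading principal (n+1)×(n+1) submatrix of A, so A_{N−1} = A; since A is positive definite, det(A_{N−2}) > 0 and the quotient is well defined.) -/

import Mathlib

open Finset Matrix ComplexOrder

/-- `leadDet A n` is the determinant of the leading principal `(n+1) × (n+1)`
submatrix `A_n = (a_{jk})_{j,k=0}^{n}` of `A` (junk value `0` if `n ≥ N`). -/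
noncomputable def leadDet {N : ℕ} (A : Matrix (Fin N) (Fin N) ℂ) (n : ℕ) : ℂ :=
  if h : n < N then
    (A.submatrix (Fin.castLE h) (Fin.castLE h) : Matrix (Fin (n + 1)) (Fin (n + 1)) ℂ).det
  else 0

/-- A principal submatrix (via an equivalence of index types) of a positive
definite matrix is positive definite. -/
lemma posDef_submatrix_equiv {m n : Type*} [Fintype m] [Fintype n]
    {M : Matrix n n ℂ} (hM : M.PosDef) (e : m ≃ n) : (M.submatrix e e).PosDef := by
  refine PosDef.of_dotProduct_mulVec_pos (hM.1.submatrix e) fun x hx => ?_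
  have hx' : (fun j => x (e.symm j)) ≠ 0 := by
    intro h
    apply hx
    ext i
    simpa using congrFun h (e i)
  have h := hM.dotProduct_mulVec_pos hx'
  have key : star x ⬝ᵥ (M.submatrix ⇑e ⇑e) *ᵥ x
      = star (fun j => x (e.symm j)) ⬝ᵥ M *ᵥ (fun j => x (e.symm j)) := by
    simp only [dotProduct, mulVec, submatrix_apply, Pi.star_apply]
    refine Fintype.sum_equiv e _ _ fun i => ?_
    rw [e.symm_apply_apply]
    congr 1
    refine Fintype.sum_equiv e _ _ fun k => ?_
    rw [e.symm_apply_apply]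
  rw [key]
  exact h

/-- The top-left block of a positive definite matrix indexed by a sum type is
positive definite. -/
lemma posDef_toBlocks₁₁ {m n : Type*} [Fintype m] [Fintype n]
    {M : Matrix (m ⊕ n) (m ⊕ n) ℂ} (hM : M.PosDef) : M.toBlocks₁₁.PosDef := by
  refine PosDef.of_dotProduct_mulVec_pos ?_ ?_
  · ext i j
    have h := congrFun (congrFun hM.1 (Sum.inl i)) (Sum.inl j)
    simpa [toBlocks₁₁, conjTranspose_apply] using h
  · intro x hx
    have hy : (Sum.elim x (0 : n → ℂ)) ≠ 0 := by
      intro h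
      apply hx
      ext i
      exact congrFun h (Sum.inl i)
    have h := hM.dotProduct_mulVec_pos hy
    simpa [dotProduct, mulVec, Fintype.sum_sum_type, toBlocks₁₁] using h

/-- If `A ∈ ℂ^{N×N}` (`N ≥ 2`) is positive definite, then the matrix `Ã` obtained
from `A` by subtracting `det(A_{N-1})/det(A_{N-2})` from the bottom-right entry
(and leaving all other entries unchanged) is positive semidefinite.
Here `A_{N-1} = A`. -/
theorem tilde_posSemidef {N : ℕ} (hN : 2 ≤ N) (A : Matrix (Fin N) (Fin N) ℂ)
    (hA : A.PosDef) :
    (Matrix.of fun j k : Fin N =>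
        if j = (⟨N - 1, by omega⟩ : Fin N) ∧ k = (⟨N - 1, by omega⟩ : Fin N) then
          A j k - A.det / leadDet A (N - 2)
        else A j k).PosSemidef := by
  obtain ⟨n, rfl⟩ : ∃ n, N = n + 2 := ⟨N - 2, by omega⟩
  have hred : n + 2 - 2 = n := rfl
  set e : Fin (n + 1) ⊕ Fin 1 ≃ Fin (n + 2) := finSumFinEquiv with he
  set c : ℂ := A.det / leadDet A n with hc
  set B : Matrix (Fin (n + 1) ⊕ Fin 1) (Fin (n + 1) ⊕ Fin 1) ℂ := A.submatrix e e with hB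
  have hBpd : B.PosDef := posDef_submatrix_equiv hA e
  have hB11 : B.toBlocks₁₁.PosDef := posDef_toBlocks₁₁ hBpd
  haveI : Invertible B.toBlocks₁₁ := hB11.isUnit.invertible
  -- B₂₁ = B₁₂ᴴ
  have h21 : B.toBlocks₂₁ = (B.toBlocks₁₂)ᴴ := by
    ext i j
    have h := congrFun (congrFun hBpd.1 (Sum.inr i)) (Sum.inl j)
    simpa [toBlocks₂₁, toBlocks₁₂, conjTranspose_apply] using h.symm
  -- leadDet A n = det of top-left block
  have hld : leadDet A n = B.toBlocks₁₁.det := by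
    rw [leadDet, dif_pos (show n < n + 2 by omega)]
    congr 1
  have hldne : leadDet A n ≠ 0 := by
    rw [hld]
    exact hB11.det_pos.ne'
  -- the Schur complement determinant formula
  have hdet : A.det =
      B.toBlocks₁₁.det *
        ((B.toBlocks₂₂ - (B.toBlocks₁₂)ᴴ * B.toBlocks₁₁⁻¹ * B.toBlocks₁₂) 0 0) := by
    have h1 : A.det = B.det := (det_submatrix_equiv_self e A).symm
    have h2 : B = fromBlocks B.toBlocks₁₁ B.toBlocks₁₂ (B.toBlocks₁₂)ᴴ B.toBlocks₂₂ := by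
      rw [← h21, fromBlocks_toBlocks]
    rw [h2, det_fromBlocks₁₁] at h1
    rw [h1, det_fin_one, invOf_eq_nonsing_inv]
  have hcval : c = (B.toBlocks₂₂ - (B.toBlocks₁₂)ᴴ * B.toBlocks₁₁⁻¹ * B.toBlocks₁₂) 0 0 := by
    rw [hc, hdet, hld, mul_comm, mul_div_assoc, div_self (hld ▸ hldne), mul_one]
  -- the Schur complement of the modified matrix is zero, hence PSD
  have hschur : ((B.toBlocks₂₂ - c • (1 : Matrix (Fin 1) (Fin 1) ℂ)) -
      (B.toBlocks₁₂)ᴴ * B.toBlocks₁₁⁻¹ * B.toBlocks₁₂).PosSemidef := by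
    have hz : ((B.toBlocks₂₂ - c • (1 : Matrix (Fin 1) (Fin 1) ℂ)) -
        (B.toBlocks₁₂)ᴴ * B.toBlocks₁₁⁻¹ * B.toBlocks₁₂) = 0 := by
      ext i j
      have hi : i = 0 := Subsingleton.elim i 0
      have hj : j = 0 := Subsingleton.elim j 0
      subst hi hj
      simp only [Matrix.sub_apply, Matrix.smul_apply, one_apply_eq, smul_eq_mul, mul_one, Matrix.zero_apply]
      rw [hcval, Matrix.sub_apply]
      ring
    rw [hz]
    exact PosSemidef.zero
  -- identify the target matrix with a block matrix
  set T : Matrix (Fin (n + 2)) (Fin (n + 2)) ℂ :=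
    Matrix.of fun j k : Fin (n + 2) =>
      if j = (⟨n + 2 - 1, by omega⟩ : Fin (n + 2)) ∧ k = (⟨n + 2 - 1, by omega⟩ : Fin (n + 2)) then
        A j k - A.det / leadDet A (n + 2 - 2)
      else A j k with hT
  show T.PosSemidef
  have hTsub : T.submatrix ⇑e ⇑e =
      fromBlocks B.toBlocks₁₁ B.toBlocks₁₂ (B.toBlocks₁₂)ᴴ
        (B.toBlocks₂₂ - c • (1 : Matrix (Fin 1) (Fin 1) ℂ)) := by
    ext i j
    cases i with
    | inl i =>
      have hrow : e (Sum.inl i) ≠ (⟨n + 2 - 1, by omega⟩ : Fin (n + 2)) := by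
        simp only [he, finSumFinEquiv_apply_left]
        intro h
        have := congrArg Fin.val h
        simp [Fin.castAdd, Fin.castLE] at this
        omega
      cases j with
      | inl j =>
        simp only [submatrix_apply, hT, of_apply, fromBlocks_apply₁₁]
        rw [if_neg (fun h => hrow h.1)]
        simp [hB, toBlocks₁₁]
      | inr j =>
        simp only [submatrix_apply, hT, of_apply, fromBlocks_apply₁₂]
        rw [if_neg (fun h => hrow h.1)]
        simp [hB, toBlocks₁₂]
    | inr i =>
      cases j with
      | inl j =>
        have hcol : e (Sum.inl j) ≠ (⟨n + 2 - 1, by omega⟩ : Fin (n + 2)) := by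
          simp only [he, finSumFinEquiv_apply_left]
          intro h
          have := congrArg Fin.val h
          simp [Fin.castAdd, Fin.castLE] at this
          omega
        simp only [submatrix_apply, hT, of_apply, fromBlocks_apply₂₁]
        rw [if_neg (fun h => hcol h.2)]
        have h := congrFun (congrFun hA.1 (e (Sum.inr i))) (e (Sum.inl j))
        simp only [conjTranspose_apply] at h
        rw [← h]
        simp [hB, toBlocks₁₂, conjTranspose_apply]
      | inr j =>
        have hi : i = 0 := Subsingleton.elim i 0
        have hj : j = 0 := Subsingleton.elim j 0
        subst hi hj
        have hlast : e (Sum.inr (0 : Fin 1)) = (⟨n + 2 - 1, by omega⟩ : Fin (n + 2)) := by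
          simp only [he, finSumFinEquiv_apply_right]
          exact Fin.ext (by simp [Fin.natAdd])
        simp only [submatrix_apply, hT, of_apply, fromBlocks_apply₂₂]
        rw [if_pos ⟨hlast, hlast⟩]
        simp only [Matrix.sub_apply, Matrix.smul_apply, one_apply_eq, smul_eq_mul, mul_one]
        simp only [hB, submatrix_apply, toBlocks₂₂, of_apply, hc, hred]
  have hTeq : T = (fromBlocks B.toBlocks₁₁ B.toBlocks₁₂ (B.toBlocks₁₂)ᴴ
      (B.toBlocks₂₂ - c • (1 : Matrix (Fin 1) (Fin 1) ℂ))).submatrix ⇑e.symm ⇑e.symm := by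
    rw [← hTsub, submatrix_submatrix]
    simp [Equiv.self_comp_symm]
  rw [hTeq]
  exact (((PosDef.fromBlocks₁₁ _ _ hB11).2 hschur)).submatrix _
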